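/- Let k ≥ 2, let C_k be the set of cyclically reduced words in F(a_1,...,a_k), and let P_k ⊆ C_k with genericity entropy t := limsup_{n→∞} log γ(n, C_k \ P_k) / (n log(2k-1)) < 1. Then for any 0 < d < 1 - t, setting m_n = ⌊(2k-1)^{dn}⌋, the fraction of m_n-tuples of cyclically reduced words of length n all of whose entries lie in P_k, among all m_n-tuples of cyclically reduced words of length n, tends to 1 as n → ∞. -/

import Mathlib

open Filter

/-- The alphabet `{a_1,...,a_k}^{±1}` of the free group `F(a_1,...,a_k)`. -/
abbrev Letter (k : ℕ) := Fin k × Bool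

/-- Formal inverse of a letter. -/
def linv {k : ℕ} (x : Letter k) : Letter k := (x.1, !x.2)

/-- A word is freely reduced if no letter is followed by its inverse. -/
def Reduced {k : ℕ} (w : List (Letter k)) : Prop :=
  w.Chain' (fun x y => y ≠ linv x)

/-- A word is cyclically reduced if all its cyclic permutations are reduced. -/
def CyclRed {k : ℕ} (w : List (Letter k)) : Prop :=
  ∀ r : ℕ, Reduced (w.rotate r)

/-- The set of cyclically reduced words in `F(a_1,...,a_k)`. -/
def Ck (k : ℕ) : Set (List (Letter k)) := {w | CyclRed w}

/-- `gam Q n` is the number of words of length `n` in `Q`. -/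
noncomputable def gam {k : ℕ} (Q : Set (List (Letter k))) (n : ℕ) : ℕ :=
  Nat.card {w : List (Letter k) // w ∈ Q ∧ w.length = n}

-- mod arithmetic helper
lemma add_mod_inj_of_lt {m c a b : ℕ} (ha : a < m) (hb : b < m)
    (h : (c + a) % m = (c + b) % m) : a = b := by
  have hm : 0 < m := lt_of_le_of_lt (Nat.zero_le a) ha
  rw [Nat.add_mod c a, Nat.add_mod c b, Nat.mod_eq_of_lt ha, Nat.mod_eq_of_lt hb] at h
  have hc' : c % m < m := Nat.mod_lt _ hm
  have e : ∀ x, x < m → (c % m + x) % m = if c % m + x < m then c % m + x else c % m + x - m := by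
    intro x hx
    split
    · exact Nat.mod_eq_of_lt ‹_›
    · rw [Nat.mod_eq_sub_mod (by omega), Nat.mod_eq_of_lt (by omega)]
  rw [e a ha, e b hb] at h
  split_ifs at h <;> omega

def enc (k : ℕ) : Letter k ≃ Fin (k * 2) :=
  (Equiv.prodCongr (Equiv.refl (Fin k)) finTwoEquiv.symm).trans finProdFinEquiv

lemma linv_linv {k : ℕ} (x : Letter k) : linv (linv x) = x := by
  simp [linv]

def next {k : ℕ} (x : Letter k) (j : Fin (2 * k - 1)) : Letter k :=
  (enc k).symm ⟨((enc k (linv x)).val + 1 + j.val) % (k * 2),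
    Nat.mod_lt _ (by have := x.1.pos; omega)⟩

lemma next_ne {k : ℕ} (x : Letter k) (j : Fin (2 * k - 1)) : next x j ≠ linv x := by
  have hkpos := x.1.pos
  intro h
  apply_fun enc k at h
  rw [next] at h
  simp only [Equiv.apply_symm_apply] at h
  have hval : ((enc k (linv x)).val + 1 + j.val) % (k * 2) = (enc k (linv x)).val :=
    congrArg Fin.val h
  have h2 : ((enc k (linv x)).val + (1 + j.val)) % (k * 2)
      = ((enc k (linv x)).val + 0) % (k * 2) := by
    rw [add_zero, Nat.mod_eq_of_lt (enc k (linv x)).isLt, ← Nat.add_assoc]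
    exact hval
  have := add_mod_inj_of_lt (m := k * 2) (by have := j.isLt; omega) (by omega) h2
  omega

lemma next_injective {k : ℕ} (x : Letter k) : Function.Injective (next (k := k) x) := by
  intro j j' h
  apply_fun enc k at h
  rw [next, next] at h
  simp only [Equiv.apply_symm_apply, Fin.mk.injEq] at h
  have h2 : ((enc k (linv x)).val + (1 + j.val)) % (k * 2)
      = ((enc k (linv x)).val + (1 + j'.val)) % (k * 2) := by
    rw [show ∀ c : ℕ, c + (1 + j.val) = c + 1 + j.val by intro c; ring,
      show ∀ c : ℕ, c + (1 + j'.val) = c + 1 + j'.val by intro c; ring, h]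
  have := add_mod_inj_of_lt (m := k * 2) (by have := j.isLt; have := x.1.pos; omega)
    (by have := j'.isLt; have := x.1.pos; omega) h2
  exact Fin.ext (by omega)

def next2 {k : ℕ} (x a : Letter k) (j : Fin (2 * k - 2)) : Letter k :=
  (enc k).symm ⟨((enc k (linv x)).val + 1 +
      (if j.val < ((enc k (linv a)).val + k * 2 - ((enc k (linv x)).val + 1)) % (k * 2)
        then j.val else j.val + 1)) % (k * 2),
    Nat.mod_lt _ (by have := x.1.pos; omega)⟩

section next2facts
variable {k : ℕ} (x a : Letter k) (j : Fin (2 * k - 2))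

private lemma hA : ((enc k (linv x)).val + 1 +
    ((enc k (linv a)).val + k * 2 - ((enc k (linv x)).val + 1)) % (k * 2)) % (k * 2)
    = (enc k (linv a)).val := by
  have hc := (enc k (linv x)).isLt
  have hea := (enc k (linv a)).isLt
  rw [Nat.add_mod_mod,
    show (enc k (linv x)).val + 1 + ((enc k (linv a)).val + k * 2 - ((enc k (linv x)).val + 1))
      = (enc k (linv a)).val + k * 2 by omega,
    Nat.add_mod_right, Nat.mod_eq_of_lt hea]

lemma next2_ne_left : next2 x a j ≠ linv x := by
  have hkpos := x.1.pos
  intro h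
  apply_fun enc k at h
  rw [next2] at h
  simp only [Equiv.apply_symm_apply] at h
  have hval := congrArg Fin.val h
  simp only at hval
  set c := (enc k (linv x)).val with hc
  set idx := (if j.val < ((enc k (linv a)).val + k * 2 - (c + 1)) % (k * 2)
        then j.val else j.val + 1) with hidx
  have hidxlt : 1 + idx < k * 2 := by
    have := j.isLt; rw [hidx]; split <;> omega
  have h2 : (c + (1 + idx)) % (k * 2) = (c + 0) % (k * 2) := by
    rw [add_zero, Nat.mod_eq_of_lt (enc k (linv x)).isLt, ← Nat.add_assoc]
    exact hval
  have := add_mod_inj_of_lt hidxlt (by omega) h2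
  omega

lemma next2_ne_right : next2 x a j ≠ linv a := by
  have hkpos := x.1.pos
  intro h
  apply_fun enc k at h
  rw [next2] at h
  simp only [Equiv.apply_symm_apply] at h
  have hval := congrArg Fin.val h
  simp only at hval
  set c := (enc k (linv x)).val with hc
  set p := ((enc k (linv a)).val + k * 2 - (c + 1)) % (k * 2) with hp
  set idx := (if j.val < p then j.val else j.val + 1) with hidx
  have hplt : p < k * 2 := Nat.mod_lt _ (by omega)
  have hidxlt : 1 + idx < k * 2 := by
    have := j.isLt; rw [hidx]; split <;> omega
  have hAx : (c + (1 + p)) % (k * 2) = (enc k (linv a)).val := by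
    rw [← Nat.add_assoc]; exact hA x a
  rcases Nat.lt_or_ge p (k * 2 - 1) with hcase | hcase
  · have h2 : (c + (1 + idx)) % (k * 2) = (c + (1 + p)) % (k * 2) := by
      rw [hAx, ← Nat.add_assoc]; exact hval
    have := add_mod_inj_of_lt hidxlt (by omega) h2
    have : idx = p := by omega
    rw [hidx] at this; split_ifs at this <;> omega
  · have hpeq : p = k * 2 - 1 := by omega
    have h2 : (c + (1 + idx)) % (k * 2) = (c + 0) % (k * 2) := by
      rw [add_zero, Nat.mod_eq_of_lt (show c < k * 2 from (enc k (linv x)).isLt)]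
      rw [← Nat.add_assoc]
      rw [hval, ← hAx, hpeq]
      rw [show c + (1 + (k * 2 - 1)) = c + k * 2 by omega, Nat.add_mod_right,
        Nat.mod_eq_of_lt (show c < k * 2 from (enc k (linv x)).isLt)]
    have := add_mod_inj_of_lt hidxlt (by omega) h2
    omega

lemma next2_injective : Function.Injective (next2 x a) := by
  intro j j' h
  have hkpos := x.1.pos
  apply_fun enc k at h
  rw [next2, next2] at h
  simp only [Equiv.apply_symm_apply, Fin.mk.injEq] at h
  set c := (enc k (linv x)).val with hc
  set p := ((enc k (linv a)).val + k * 2 - (c + 1)) % (k * 2) with hp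
  set idx := (if j.val < p then j.val else j.val + 1) with hidx
  set idx' := (if j'.val < p then j'.val else j'.val + 1) with hidx'
  have h2 : (c + (1 + idx)) % (k * 2) = (c + (1 + idx')) % (k * 2) := by
    rw [← Nat.add_assoc, ← Nat.add_assoc]; exact h
  have hj := j.isLt; have hj' := j'.isLt
  have hidxlt : 1 + idx < k * 2 := by rw [hidx]; split <;> omega
  have hidxlt' : 1 + idx' < k * 2 := by rw [hidx']; split <;> omega
  have heq := add_mod_inj_of_lt hidxlt hidxlt' h2
  apply Fin.ext
  rw [hidx] at heq; rw [hidx'] at heq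
  split_ifs at heq <;> omega
end next2facts

def wordOf {k : ℕ} (a : Letter k) : Letter k → List (Fin (2 * k - 1)) → Fin (2 * k - 2) →
    List (Letter k)
  | x, [], j => [x, next2 x a j]
  | x, i :: l, j => x :: wordOf a (next x i) l j

section wordOf
variable {k : ℕ} (a : Letter k)

lemma length_wordOf (x : Letter k) (l : List (Fin (2 * k - 1))) (j : Fin (2 * k - 2)) :
    (wordOf a x l j).length = l.length + 2 := by
  induction l generalizing x with
  | nil => rfl
  | cons i l ih => simp [wordOf, ih]

lemma head?_wordOf (x : Letter k) (l : List (Fin (2 * k - 1))) (j : Fin (2 * k - 2)) :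
    (wordOf a x l j).head? = some x := by
  cases l <;> rfl

lemma getLast?_wordOf (x : Letter k) (l : List (Fin (2 * k - 1))) (j : Fin (2 * k - 2)) :
    ∃ y, (wordOf a x l j).getLast? = some (next2 y a j) := by
  induction l generalizing x with
  | nil => exact ⟨x, rfl⟩
  | cons i l ih =>
    obtain ⟨y, hy⟩ := ih (next x i)
    refine ⟨y, ?_⟩
    rw [show wordOf a x (i :: l) j = x :: wordOf a (next x i) l j from rfl, ← hy]
    cases hl : wordOf a (next x i) l j with
    | nil => exact absurd (congrArg List.length hl) (by simp [length_wordOf])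
    | cons b bs => rw [List.getLast?_cons_cons]

lemma reduced_wordOf (x : Letter k) (l : List (Fin (2 * k - 1))) (j : Fin (2 * k - 2)) :
    Reduced (wordOf a x l j) := by
  induction l generalizing x with
  | nil => exact List.isChain_pair.mpr (next2_ne_left x a j)
  | cons i l ih =>
    rw [wordOf, Reduced, List.Chain', List.isChain_cons]
    refine ⟨?_, ih (next x i)⟩
    intro y hy
    rw [head?_wordOf] at hy
    cases hy
    exact next_ne x i

lemma wordOf_injective (x : Letter k) (l l' : List (Fin (2 * k - 1)))
    (j j' : Fin (2 * k - 2)) (hlen : l.length = l'.length)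
    (h : wordOf a x l j = wordOf a x l' j') : l = l' ∧ j = j' := by
  induction l generalizing x l' with
  | nil =>
    cases l' with
    | nil =>
      rw [wordOf, wordOf] at h
      simp only [List.cons.injEq, and_true] at h
      exact ⟨rfl, next2_injective x a h.2⟩
    | cons i' l' => simp at hlen
  | cons i l ih =>
    cases l' with
    | nil => simp at hlen
    | cons i' l' =>
      rw [wordOf, wordOf] at h
      simp only [List.cons.injEq, true_and] at h
      have hii : next x i = next x i' := by
        have := congrArg List.head? h
        rw [head?_wordOf, head?_wordOf] at this
        exact Option.some.inj this
      have hi : i = i' := next_injective x hii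
      subst hi
      obtain ⟨h1, h2⟩ := ih (next x i) l' (by simpa using hlen) h
      exact ⟨by rw [h1], h2⟩

lemma cyclRed_of_reduced {w : List (Letter k)} (h : Reduced w)
    (h2 : ∀ x ∈ w.head?, ∀ y ∈ w.getLast?, x ≠ linv y) : CyclRed w := by
  intro r
  rcases eq_or_ne w [] with rfl | hw
  · simp [Reduced, List.Chain']
  · have hlen : 0 < w.length := List.length_pos_iff.mpr hw
    rw [← List.rotate_mod, List.rotate_eq_drop_append_take (Nat.mod_lt _ hlen).le]
    have hww : Reduced (w ++ w) := by
      rw [Reduced, List.Chain', List.isChain_append]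
      exact ⟨h, h, fun y hy x hx => h2 x hx y hy⟩
    refine hww.infix ⟨w.take (r % w.length), w.drop (r % w.length), ?_⟩
    simp only [List.append_assoc]
    rw [List.take_append_drop, ← List.append_assoc, List.take_append_drop]

lemma cyclRed_wordOf (l : List (Fin (2 * k - 1))) (j : Fin (2 * k - 2)) :
    CyclRed (wordOf a a l j) := by
  apply cyclRed_of_reduced (reduced_wordOf a a l j)
  intro x hx y hy
  rw [head?_wordOf] at hx
  cases hx
  obtain ⟨z, hz⟩ := getLast?_wordOf a a l j
  rw [hz] at hy
  cases hy
  intro hcontra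
  exact next2_ne_right z a j (by rw [← linv_linv (next2 z a j), ← hcontra])
end wordOf

section counting
variable {k : ℕ}

lemma gam_eq_ncard (Q : Set (List (Letter k))) (n : ℕ) :
    gam Q n = Set.ncard {w : List (Letter k) | w ∈ Q ∧ w.length = n} := rfl

lemma setOf_finite (Q : Set (List (Letter k))) (n : ℕ) :
    {w : List (Letter k) | w ∈ Q ∧ w.length = n}.Finite :=
  (List.finite_length_eq (Letter k) n).subset fun w hw => hw.2

lemma gam_add {P : Set (List (Letter k))} (hP : P ⊆ Ck k) (n : ℕ) :
    gam P n + gam (Ck k \ P) n = gam (Ck k) n := by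
  rw [gam_eq_ncard, gam_eq_ncard, gam_eq_ncard]
  rw [← Set.ncard_union_eq ?dis (setOf_finite _ n) (setOf_finite _ n)]
  · congr 1
    ext w
    simp only [Set.mem_union, Set.mem_setOf_eq, Set.mem_diff]
    constructor
    · rintro (⟨h1, h2⟩ | ⟨⟨h1, _⟩, h2⟩)
      · exact ⟨hP h1, h2⟩
      · exact ⟨h1, h2⟩
    · rintro ⟨h1, h2⟩
      by_cases hw : w ∈ P
      · exact Or.inl ⟨hw, h2⟩
      · exact Or.inr ⟨⟨h1, hw⟩, h2⟩
  case dis =>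
    rw [Set.disjoint_left]
    rintro w ⟨h1, _⟩ ⟨⟨_, h3⟩, _⟩
    exact h3 h1

lemma ncard_length_eq (n : ℕ) :
    Nat.card {w : List (Letter k) // w.length = n} = (k * 2) ^ n := by
  have e : {w : List (Letter k) // w.length = n} ≃ (Fin n → Letter k) :=
    (Equiv.refl (List.Vector (Letter k) n)).trans (Equiv.vectorEquivFin _ _)
  rw [Nat.card_congr e]
  simp [Nat.card_eq_fintype_card]

lemma gam_le_pow (Q : Set (List (Letter k))) (n : ℕ) : gam Q n ≤ (k * 2) ^ n := by
  rw [← ncard_length_eq (k := k) n]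
  haveI : Finite {w : List (Letter k) // w.length = n} :=
    (List.finite_length_eq (Letter k) n).to_subtype
  apply Nat.card_le_card_of_injective
    (fun w => (⟨w.1, w.2.2⟩ : {w : List (Letter k) // w.length = n}))
  intro w w' h
  simp only [Subtype.mk.injEq] at h
  exact Subtype.ext h

lemma gam_lower (hk : 2 ≤ k) {n : ℕ} (hn : 2 ≤ n) :
    (2 * k - 2) * (2 * k - 1) ^ (n - 2) ≤ gam (Ck k) n := by
  set a : Letter k := (⟨0, by omega⟩, true) with ha
  haveI : Finite {w : List (Letter k) // w ∈ Ck k ∧ w.length = n} :=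
    (setOf_finite (Ck k) n).to_subtype
  have hGinj : Function.Injective
      (fun p : (Fin (n - 2) → Fin (2 * k - 1)) × Fin (2 * k - 2) =>
        (⟨wordOf a a (List.ofFn p.1) p.2, cyclRed_wordOf a _ _,
          by rw [length_wordOf, List.length_ofFn]; omega⟩ :
          {w : List (Letter k) // w ∈ Ck k ∧ w.length = n})) := by
    rintro ⟨f, j⟩ ⟨f', j'⟩ h
    have h1 : wordOf a a (List.ofFn f) j = wordOf a a (List.ofFn f') j' :=
      congrArg Subtype.val h
    obtain ⟨hl, hj⟩ := wordOf_injective a a _ _ _ _ (by simp) h1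
    have := List.ofFn_injective hl
    subst this; subst hj; rfl
  calc (2 * k - 2) * (2 * k - 1) ^ (n - 2)
      = Nat.card ((Fin (n - 2) → Fin (2 * k - 1)) × Fin (2 * k - 2)) := by
        simp [Nat.card_eq_fintype_card, mul_comm]
    _ ≤ Nat.card {w : List (Letter k) // w ∈ Ck k ∧ w.length = n} :=
        Nat.card_le_card_of_injective _ hGinj
    _ = gam (Ck k) n := rfl

end counting

/-- If P ⊆ C_k has genericity entropy t < 1 and 0 < d < 1 - t, then the fraction of
m_n-tuples (m_n = ⌊(2k-1)^{dn}⌋) of length-n cyclically reduced words all of whose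
entries lie in P tends to 1. -/
theorem stmt4 (k : ℕ) (hk : 2 ≤ k) (P : Set (List (Letter k))) (hP : P ⊆ Ck k)
    (t d : ℝ)
    (ht : t = limsup (fun n : ℕ =>
      Real.log (gam (Ck k \ P) n) / (n * Real.log (2 * (k : ℝ) - 1))) atTop)
    (ht1 : t < 1) (hd0 : 0 < d) (hd1 : d < 1 - t) :
    Tendsto (fun n : ℕ =>
        ((gam P n : ℝ) ^ ⌊(2 * (k : ℝ) - 1) ^ (d * n)⌋₊) /
          ((gam (Ck k) n : ℝ) ^ ⌊(2 * (k : ℝ) - 1) ^ (d * n)⌋₊))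
      atTop (nhds 1) := by
  have hk2 : (2:ℝ) ≤ (k:ℝ) := by exact_mod_cast hk
  set lam : ℝ := 2 * (k:ℝ) - 1 with hlam
  have hlam1 : (1:ℝ) < lam := by rw [hlam]; linarith
  have hlam0 : (0:ℝ) < lam := by linarith
  have hlog : 0 < Real.log lam := Real.log_pos hlam1
  set ε : ℝ := (1 - t - d) / 2 with hε
  have hε0 : 0 < ε := by rw [hε]; linarith
  set B : ℕ → ℕ := gam (Ck k \ P) with hB
  set C : ℕ → ℕ := gam (Ck k) with hC
  set c0 : ℝ := (2 * (k:ℝ) - 2) / lam ^ 2 with hc0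
  have hc0pos : 0 < c0 := by
    rw [hc0]; apply div_pos (by linarith) (by positivity)
  set m : ℕ → ℕ := fun n => ⌊lam ^ (d * (n:ℝ))⌋₊ with hm
  -- boundedness of the limsup sequence
  have hbdd : IsBoundedUnder (· ≤ ·) atTop
      (fun n : ℕ => Real.log (B n) / (n * Real.log lam)) := by
    apply isBoundedUnder_of
    refine ⟨Real.log (k * 2) / Real.log lam, fun n => ?_⟩
    have hM : 0 ≤ Real.log (k * 2) / Real.log lam :=
      div_nonneg (Real.log_nonneg (by linarith)) hlog.le
    rcases Nat.eq_zero_or_pos n with rfl | hn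
    · simpa using hM
    rcases Nat.eq_zero_or_pos (B n) with hBn | hBn
    · rw [hBn]; simpa using hM
    · have hnR : (0:ℝ) < n := by exact_mod_cast hn
      have h1 : Real.log (B n) ≤ n * Real.log (k * 2) := by
        calc Real.log (B n) ≤ Real.log (((k:ℝ) * 2) ^ n) := by
              apply Real.log_le_log (by exact_mod_cast hBn)
              exact_mod_cast gam_le_pow (Ck k \ P) n
          _ = n * Real.log (k * 2) := by rw [Real.log_pow]
      calc Real.log (B n) / (n * Real.log lam)
          ≤ (n * Real.log (k * 2)) / (n * Real.log lam) := by
            apply div_le_div_of_nonneg_right h1 (by positivity)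
        _ = Real.log (k * 2) / Real.log lam := by
            rw [mul_div_mul_left _ _ (ne_of_gt hnR)]
  -- eventual upper bound for B
  have hev : ∀ᶠ n in atTop, Real.log (B n) / (n * Real.log lam) < t + ε := by
    apply eventually_lt_of_limsup_lt _ hbdd
    rw [← ht]; linarith
  have hBle : ∀ᶠ n in atTop, (B n : ℝ) ≤ lam ^ ((t + ε) * n) := by
    filter_upwards [hev, eventually_ge_atTop 1] with n hn hn1
    rcases Nat.eq_zero_or_pos (B n) with hBn | hBn
    · rw [hBn]; exact_mod_cast Real.rpow_nonneg hlam0.le _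
    · have hpos : (0:ℝ) < B n := by exact_mod_cast hBn
      have hnR : (0:ℝ) < n := by exact_mod_cast hn1
      have hlog2 : Real.log (B n) < (t + ε) * (n * Real.log lam) := by
        rwa [div_lt_iff₀ (by positivity)] at hn
      calc (B n : ℝ) = Real.exp (Real.log (B n)) := (Real.exp_log hpos).symm
        _ ≤ Real.exp (Real.log lam * ((t + ε) * n)) := by
            apply Real.exp_le_exp.mpr
            rw [show Real.log lam * ((t + ε) * n) = (t + ε) * (n * Real.log lam) by ring]
            exact hlog2.le
        _ = lam ^ ((t + ε) * (n:ℝ)) := (Real.rpow_def_of_pos hlam0 _).symm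
  -- eventual lower bound for C
  have hClow : ∀ᶠ n : ℕ in atTop, c0 * lam ^ (n:ℝ) ≤ (C n : ℝ) := by
    filter_upwards [eventually_ge_atTop 2] with n hn
    have h : (2 * k - 2) * (2 * k - 1) ^ (n - 2) ≤ C n := by
      rw [hC]; exact gam_lower hk hn
    have h2k : 2 ≤ 2 * k := by omega
    have h1k : 1 ≤ 2 * k := by omega
    have hcastR : (2 * (k:ℝ) - 2) * lam ^ (n - 2 : ℕ) ≤ (C n : ℝ) := by
      have h' : (((2 * k - 2) * (2 * k - 1) ^ (n - 2) : ℕ) : ℝ) ≤ (C n : ℝ) :=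
        Nat.cast_le.mpr h
      have e : (((2 * k - 2) * (2 * k - 1) ^ (n - 2) : ℕ) : ℝ)
          = (2 * (k:ℝ) - 2) * lam ^ (n - 2 : ℕ) := by
        rw [hlam, Nat.cast_mul, Nat.cast_pow, Nat.cast_sub h2k, Nat.cast_sub h1k]
        push_cast
        ring
      rwa [e] at h'

    calc c0 * lam ^ (n:ℝ) = (2 * (k:ℝ) - 2) * (lam ^ (n:ℕ) / lam ^ 2) := by
          rw [Real.rpow_natCast, hc0]; ring
      _ = (2 * (k:ℝ) - 2) * lam ^ (n - 2 : ℕ) := by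
          rw [pow_sub₀ _ (ne_of_gt hlam0) hn, ← div_eq_mul_inv]
      _ ≤ (C n : ℝ) := hcastR
  -- the quantity m n * (B n / C n) tends to zero
  set r : ℝ := lam ^ (-ε) with hr
  have hr0 : 0 ≤ r := Real.rpow_nonneg hlam0.le _
  have hr1 : r < 1 := Real.rpow_lt_one_of_one_lt_of_neg hlam1 (by linarith)
  have hX0 : Tendsto (fun n : ℕ => (m n : ℝ) * ((B n : ℝ) / (C n : ℝ))) atTop (nhds 0) := by
    have hlim : Tendsto (fun n : ℕ => (1 / c0) * r ^ n) atTop (nhds 0) := by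
      have := (tendsto_pow_atTop_nhds_zero_of_lt_one hr0 hr1).const_mul (1 / c0)
      simpa using this
    apply tendsto_of_tendsto_of_tendsto_of_le_of_le' tendsto_const_nhds hlim
    · filter_upwards with n
      positivity
    · filter_upwards [hBle, hClow, eventually_ge_atTop 2] with n hBn hCn hn2
      have hCpos : (0:ℝ) < C n := lt_of_lt_of_le (by positivity) hCn
      have hmle : (m n : ℝ) ≤ lam ^ (d * (n:ℝ)) := Nat.floor_le (Real.rpow_nonneg hlam0.le _)
      have hdiv : (B n : ℝ) / (C n : ℝ) ≤ lam ^ ((t + ε) * n) / (c0 * lam ^ (n:ℝ)) :=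
        div_le_div₀ (Real.rpow_nonneg hlam0.le _) hBn (by positivity) hCn
      have key : lam ^ (d * (n:ℝ)) * (lam ^ ((t + ε) * (n:ℝ)) / (c0 * lam ^ (n:ℝ)))
          = (1 / c0) * r ^ n := by
        have h1 : lam ^ (d * (n:ℝ)) * lam ^ ((t + ε) * (n:ℝ)) = lam ^ ((1 - ε) * (n:ℝ)) := by
          rw [← Real.rpow_add hlam0]
          congr 1
          rw [hε]; ring
        have h2 : lam ^ ((1 - ε) * (n:ℝ)) / lam ^ (n:ℝ) = r ^ n := by
          rw [← Real.rpow_sub hlam0, show (1 - ε) * (n:ℝ) - (n:ℝ) = (-ε) * (n:ℝ) by ring,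
            Real.rpow_mul hlam0.le, Real.rpow_natCast]
        calc lam ^ (d * (n:ℝ)) * (lam ^ ((t + ε) * (n:ℝ)) / (c0 * lam ^ (n:ℝ)))
            = lam ^ (d * (n:ℝ)) * lam ^ ((t + ε) * (n:ℝ)) / (c0 * lam ^ (n:ℝ)) := by
              rw [mul_div_assoc]
          _ = lam ^ ((1 - ε) * (n:ℝ)) / (c0 * lam ^ (n:ℝ)) := by rw [h1]
          _ = lam ^ ((1 - ε) * (n:ℝ)) / lam ^ (n:ℝ) / c0 := by
              rw [mul_comm c0, ← div_div]
          _ = r ^ n / c0 := by rw [h2]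
          _ = (1 / c0) * r ^ n := by rw [div_eq_mul_inv, mul_comm, one_div]
      calc (m n : ℝ) * ((B n : ℝ) / (C n : ℝ))
          ≤ lam ^ (d * (n:ℝ)) * (lam ^ ((t + ε) * (n:ℝ)) / (c0 * lam ^ (n:ℝ))) := by
            apply mul_le_mul hmle hdiv (by positivity) (Real.rpow_nonneg hlam0.le _)
        _ = (1 / c0) * r ^ n := key
  -- final squeeze
  have hone : Tendsto (fun n : ℕ => 1 - (m n : ℝ) * ((B n : ℝ) / (C n : ℝ))) atTop (nhds 1) := by
    have := hX0.const_sub 1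
    simpa using this
  show Tendsto (fun n : ℕ => (gam P n : ℝ) ^ (m n) / ((C n : ℝ)) ^ (m n)) atTop (nhds 1)
  apply tendsto_of_tendsto_of_tendsto_of_le_of_le' hone
    (tendsto_const_nhds : Tendsto (fun _ : ℕ => (1:ℝ)) atTop (nhds 1))
  · filter_upwards [hClow, eventually_ge_atTop 2] with n hCn hn2
    have hCpos : (0:ℝ) < C n := lt_of_lt_of_le (by positivity) hCn
    have hadd : gam P n + B n = C n := by rw [hB, hC]; exact gam_add hP n
    have hPC : (gam P n : ℝ) = (C n : ℝ) - (B n : ℝ) := by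
      have : ((gam P n : ℕ) : ℝ) + (B n : ℝ) = (C n : ℝ) := by exact_mod_cast hadd
      linarith
    have hu0 : (0:ℝ) ≤ (B n : ℝ) / (C n : ℝ) := by positivity
    have hu1 : (B n : ℝ) / (C n : ℝ) ≤ 1 := by
      rw [div_le_one hCpos]
      exact_mod_cast (by omega : B n ≤ C n)
    have hrw : (gam P n : ℝ) ^ (m n) / (C n : ℝ) ^ (m n)
        = (1 - (B n : ℝ) / (C n : ℝ)) ^ (m n) := by
      rw [← div_pow, hPC, sub_div, div_self (ne_of_gt hCpos)]
    rw [hrw]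
    have hber := one_add_mul_le_pow (a := -((B n : ℝ) / (C n : ℝ))) (by linarith) (m n)
    calc 1 - (m n : ℝ) * ((B n : ℝ) / (C n : ℝ))
        = 1 + (m n : ℝ) * (-((B n : ℝ) / (C n : ℝ))) := by ring
      _ ≤ (1 + -((B n : ℝ) / (C n : ℝ))) ^ (m n) := hber
      _ = (1 - (B n : ℝ) / (C n : ℝ)) ^ (m n) := by rw [← sub_eq_add_neg]
  · filter_upwards [hClow, eventually_ge_atTop 2] with n hCn hn2
    have hCpos : (0:ℝ) < C n := lt_of_lt_of_le (by positivity) hCn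
    have hadd : gam P n + B n = C n := by rw [hB, hC]; exact gam_add hP n
    have hPle : (gam P n : ℝ) ≤ (C n : ℝ) := by
      exact_mod_cast (by omega : gam P n ≤ C n)
    rw [div_le_one (by positivity)]
    exact pow_le_pow_left₀ (by positivity) hPle _
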